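/- Pointwise density-score bound for normal perturbations: if S is a real random variable and X = S + Z where Z ~ N(0,τ) is independent of S, then for every integer k ≥ 1 and all x, p_X(x)|ρ_X(x)|^k ≤ c_{τ,k}·p_U(x), where c_{τ,k} = √2·(2k/(τe))^{k/2}, p_X is the density of X with score ρ_X, and p_U is the density of U = S + Z' with Z' ~ N(0,2τ) independent of S. -/

import Mathlib

open MeasureTheory Real

/-- The centered Gaussian density with variance `t`. -/
noncomputable def gauss (t x : ℝ) : ℝ := (Real.sqrt (2 * Real.pi * t))⁻¹ * Real.exp (-(x ^ 2) / (2 * t))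

lemma gauss_pos {t : ℝ} (ht : 0 < t) (x : ℝ) : 0 < gauss t x := by
  unfold gauss
  positivity

lemma gauss_le {t : ℝ} (ht : 0 < t) (x : ℝ) : gauss t x ≤ (Real.sqrt (2 * Real.pi * t))⁻¹ := by
  unfold gauss
  nth_rewrite 2 [← mul_one ((Real.sqrt (2 * Real.pi * t))⁻¹)]
  gcongr
  rw [Real.exp_le_one_iff, neg_div]
  have : 0 ≤ x ^ 2 / (2 * t) := by positivity
  linarith

lemma gauss_cont (t : ℝ) : Continuous (gauss t) := by
  unfold gauss
  fun_prop

-- |v| * exp(-(a*v^2)) ≤ (√a)⁻¹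
lemma abs_mul_exp_bound {a : ℝ} (ha : 0 < a) (v : ℝ) :
    |v| * Real.exp (-(a * v ^ 2)) ≤ (Real.sqrt a)⁻¹ := by
  have hs : 0 < Real.sqrt a := Real.sqrt_pos.2 ha
  rw [Real.exp_neg, mul_inv_le_iff₀ (Real.exp_pos _), inv_mul_eq_div, le_div_iff₀ hs, mul_comm]
  have h1 : Real.sqrt a * |v| ≤ 1 + (Real.sqrt a * |v|) ^ 2 := by nlinarith [sq_nonneg (Real.sqrt a * |v| - 1)]
  have h2 : (Real.sqrt a * |v|) ^ 2 = a * v ^ 2 := by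
    rw [mul_pow, Real.sq_sqrt ha.le, sq_abs]
  calc Real.sqrt a * |v| ≤ 1 + a * v ^ 2 := by rw [← h2]; linarith
    _ ≤ Real.exp (a * v ^ 2) := by linarith [Real.add_one_le_exp (a * v ^ 2)]

lemma pow_exp_bound {τ : ℝ} (hτ : 0 < τ) {k : ℕ} (hk : 1 ≤ k) {t : ℝ} (ht : 0 ≤ t) :
    (2 * t / τ) ^ k * Real.exp (-t) ≤ (2 * k / (τ * Real.exp 1)) ^ k := by
  have hkR : (0:ℝ) < k := by exact_mod_cast hk
  have h1 : t / k ≤ Real.exp (t / k - 1) := by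
    have := Real.add_one_le_exp (t / k - 1); linarith
  have h2 : (t / k) ^ k ≤ Real.exp (t / k - 1) ^ k :=
    pow_le_pow_left₀ (by positivity) h1 k
  have h3 : Real.exp (t / k - 1) ^ k = Real.exp (t - k) := by
    rw [← Real.exp_nat_mul]
    congr 1
    field_simp
  rw [h3] at h2
  have h4 : (2 * t / τ) ^ k = (2 * k / τ) ^ k * (t / k) ^ k := by
    rw [← mul_pow]
    congr 1
    field_simp
  have h5 : (2 * k / (τ * Real.exp 1)) ^ k = (2 * k / τ) ^ k * Real.exp (-(k:ℝ)) := by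
    have he : Real.exp (-(k:ℝ)) = (Real.exp 1 ^ k)⁻¹ := by
      rw [← Real.exp_nat_mul, ← Real.exp_neg]
      norm_num
    rw [he]
    rw [div_pow, div_pow, mul_pow]
    ring
  calc (2 * t / τ) ^ k * Real.exp (-t)
      = (2 * k / τ) ^ k * ((t / k) ^ k * Real.exp (-t)) := by rw [h4]; ring
    _ ≤ (2 * k / τ) ^ k * (Real.exp (t - k) * Real.exp (-t)) := by
        exact mul_le_mul_of_nonneg_left
          (mul_le_mul_of_nonneg_right h2 (Real.exp_pos _).le) (by positivity)
    _ = (2 * k / (τ * Real.exp 1)) ^ k := by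
        rw [← Real.exp_add, h5]; congr 2; ring

lemma pointwise_bound {τ : ℝ} (hτ : 0 < τ) {k : ℕ} (hk : 1 ≤ k) (u : ℝ) :
    (|u| / τ) ^ k * gauss τ u
      ≤ Real.sqrt 2 * (2 * k / (τ * Real.exp 1)) ^ ((k : ℝ) / 2) * gauss (2 * τ) u := by
  have hG2 : 0 < gauss (2 * τ) u := gauss_pos (by linarith) u
  have hgauss : gauss τ u = Real.sqrt 2 * gauss (2 * τ) u * Real.exp (-(u ^ 2) / (4 * τ)) := by
    unfold gauss
    have h2 : (2 : ℝ) * Real.pi * (2 * τ) = 2 * (2 * Real.pi * τ) := by ring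
    rw [h2, Real.sqrt_mul (by norm_num) (2 * Real.pi * τ), mul_inv]
    have hs2 : Real.sqrt 2 * (Real.sqrt 2)⁻¹ = 1 := by
      rw [mul_inv_cancel₀]; positivity
    rw [show Real.sqrt 2 * ((Real.sqrt 2)⁻¹ * (Real.sqrt (2 * Real.pi * τ))⁻¹ *
        Real.exp (-u ^ 2 / (2 * (2 * τ)))) * Real.exp (-u ^ 2 / (4 * τ))
      = (Real.sqrt 2 * (Real.sqrt 2)⁻¹) * ((Real.sqrt (2 * Real.pi * τ))⁻¹ *
        (Real.exp (-u ^ 2 / (2 * (2 * τ))) * Real.exp (-u ^ 2 / (4 * τ)))) from by ring, hs2,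
      one_mul, ← Real.exp_add]
    congr 2
    field_simp
    ring
  rw [hgauss]
  have key : (|u| / τ) ^ k * Real.exp (-(u ^ 2) / (4 * τ))
      ≤ (2 * k / (τ * Real.exp 1)) ^ ((k : ℝ) / 2) := by
    have hL : 0 ≤ (|u| / τ) ^ k * Real.exp (-(u ^ 2) / (4 * τ)) := by positivity
    have hR : (0:ℝ) ≤ (2 * k / (τ * Real.exp 1)) ^ ((k : ℝ) / 2) := by positivity
    rw [← pow_le_pow_iff_left₀ hL hR (two_ne_zero) ]
    have hsq : ((2 * k / (τ * Real.exp 1)) ^ ((k : ℝ) / 2)) ^ 2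
        = (2 * (k:ℝ) / (τ * Real.exp 1)) ^ k := by
      rw [← Real.rpow_natCast ((2 * k / (τ * Real.exp 1)) ^ ((k : ℝ) / 2)) 2,
        ← Real.rpow_mul (by positivity)]
      norm_num
    rw [hsq, mul_pow, ← pow_mul, ← Real.exp_nat_mul]
    have ht : (0:ℝ) ≤ u ^ 2 / (2 * τ) := by positivity
    have := pow_exp_bound hτ hk ht
    have heq1 : (2 * (u ^ 2 / (2 * τ)) / τ) ^ k = ((|u| / τ) ^ 2) ^ k := by
      congr 1
      rw [div_pow, sq_abs]
      field_simp
    have heq2 : Real.exp (-(u ^ 2 / (2 * τ))) = Real.exp ((2:ℕ) * (-(u ^ 2) / (4 * τ))) := by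
      congr 1
      field_simp
      ring
    rw [heq1, heq2] at this
    rw [mul_comm k 2, pow_mul]
    exact this
  calc (|u| / τ) ^ k * (Real.sqrt 2 * gauss (2 * τ) u * Real.exp (-(u ^ 2) / (4 * τ)))
      = Real.sqrt 2 * gauss (2 * τ) u * ((|u| / τ) ^ k * Real.exp (-(u ^ 2) / (4 * τ))) := by ring
    _ ≤ Real.sqrt 2 * gauss (2 * τ) u * ((2 * k / (τ * Real.exp 1)) ^ ((k : ℝ) / 2)) := by
        exact mul_le_mul_of_nonneg_left key (by positivity)
    _ = Real.sqrt 2 * (2 * k / (τ * Real.exp 1)) ^ ((k : ℝ) / 2) * gauss (2 * τ) u := by ring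

lemma F_bound {τ : ℝ} (hτ : 0 < τ) {k : ℕ} (hk : 1 ≤ k) (u : ℝ) :
    (|u| / τ) * gauss τ u ^ (1/(k:ℝ))
      ≤ (Real.sqrt (2 * Real.pi * τ))⁻¹ ^ (1/(k:ℝ)) * ((Real.sqrt ((2*τ*(k:ℝ))⁻¹))⁻¹ / τ) := by
  have hkR : (0:ℝ) < k := by exact_mod_cast hk
  have ha : 0 < (2*τ*(k:ℝ))⁻¹ := by positivity
  have e : gauss τ u ^ (1/(k:ℝ)) = (Real.sqrt (2*Real.pi*τ))⁻¹ ^ (1/(k:ℝ))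
      * Real.exp (-((2*τ*(k:ℝ))⁻¹ * u^2)) := by
    unfold gauss
    rw [Real.mul_rpow (by positivity) (Real.exp_pos _).le, ← Real.exp_mul]
    congr 2
    field_simp
  rw [e]
  have h1 : |u| * Real.exp (-((2*τ*(k:ℝ))⁻¹ * u^2)) ≤ (Real.sqrt ((2*τ*(k:ℝ))⁻¹))⁻¹ :=
    abs_mul_exp_bound ha u
  calc (|u| / τ) * ((Real.sqrt (2*Real.pi*τ))⁻¹ ^ (1/(k:ℝ)) * Real.exp (-((2*τ*(k:ℝ))⁻¹ * u^2)))
      = (Real.sqrt (2*Real.pi*τ))⁻¹ ^ (1/(k:ℝ)) * ((|u| * Real.exp (-((2*τ*(k:ℝ))⁻¹ * u^2))) / τ) := by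
        ring
    _ ≤ (Real.sqrt (2*Real.pi*τ))⁻¹ ^ (1/(k:ℝ)) * ((Real.sqrt ((2*τ*(k:ℝ))⁻¹))⁻¹ / τ) := by
        have h2 : (0:ℝ) ≤ (Real.sqrt (2*Real.pi*τ))⁻¹ ^ (1/(k:ℝ)) := by positivity
        gcongr

lemma bounded_cont_integrable {μ : Measure ℝ} [IsFiniteMeasure μ] {f : ℝ → ℝ}
    (hf : Continuous f) (C : ℝ) (hC : ∀ s, ‖f s‖ ≤ C) : Integrable f μ :=
  (integrable_const C).mono' hf.aestronglyMeasurable (ae_of_all _ hC)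

lemma abstract_holder {μ : Measure ℝ} [IsProbabilityMeasure μ] {k : ℕ} (hk : 1 ≤ k)
    {h g : ℝ → ℝ} (hh0 : ∀ s, 0 ≤ h s) (hg0 : ∀ s, 0 < g s)
    (hhc : Continuous h) (hgc : Continuous g)
    (CF : ℝ) (hCF : ∀ s, h s * g s ^ (1/(k:ℝ)) ≤ CF)
    (CG : ℝ) (hCG : ∀ s, g s ≤ CG) :
    (∫ s, h s * g s ∂μ) ^ k ≤ (∫ s, h s ^ k * g s ∂μ) * (∫ s, g s ∂μ) ^ (k - 1) := by
  rcases eq_or_lt_of_le hk with h1 | hk2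
  · simp [← h1]
  -- k ≥ 2
  have hkR : (1:ℝ) < (k:ℝ) := by exact_mod_cast hk2
  have hkne : (k:ℝ) ≠ 0 := by positivity
  have hpq : (k:ℝ).HolderConjugate ((k:ℝ).conjExponent) := Real.HolderConjugate.conjExponent hkR
  set q : ℝ := (k:ℝ).conjExponent with hq
  have hqval : q = (k:ℝ) / ((k:ℝ) - 1) := rfl
  set F : ℝ → ℝ := fun s => h s * g s ^ (1/(k:ℝ)) with hF
  set G : ℝ → ℝ := fun s => g s ^ (((k:ℝ) - 1)/(k:ℝ)) with hG
  have hF0 : ∀ s, 0 ≤ F s := fun s => mul_nonneg (hh0 s) (Real.rpow_nonneg (hg0 s).le _)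
  have hG0 : ∀ s, 0 ≤ G s := fun s => Real.rpow_nonneg (hg0 s).le _
  have hFc : Continuous F := hhc.mul (hgc.rpow_const fun s => Or.inl (hg0 s).ne')
  have hGc : Continuous G := hgc.rpow_const fun s => Or.inl (hg0 s).ne'
  have hFmem : MemLp F (ENNReal.ofReal (k:ℝ)) μ :=
    (memLp_top_of_bound hFc.aestronglyMeasurable CF
      (ae_of_all _ fun s => by rw [Real.norm_of_nonneg (hF0 s)]; exact hCF s)).mono_exponent le_top
  have hGmem : MemLp G (ENNReal.ofReal q) μ :=
    (memLp_top_of_bound hGc.aestronglyMeasurable (CG ^ (((k:ℝ) - 1)/(k:ℝ)))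
      (ae_of_all _ fun s => by
        rw [Real.norm_of_nonneg (hG0 s)]
        exact Real.rpow_le_rpow (hg0 s).le (hCG s)
          (div_nonneg (by linarith) (by positivity)))).mono_exponent le_top
  have H := integral_mul_le_Lp_mul_Lq_of_nonneg hpq (ae_of_all _ hF0) (ae_of_all _ hG0) hFmem hGmem
  have e1 : ∀ s, F s * G s = h s * g s := by
    intro s
    rw [hF, hG, mul_assoc, ← Real.rpow_add (hg0 s)]
    have he : 1/(k:ℝ) + ((k:ℝ) - 1)/(k:ℝ) = 1 := by field_simp; ring
    rw [he, Real.rpow_one]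
  have e2 : ∀ s, F s ^ (k:ℝ) = h s ^ k * g s := by
    intro s
    rw [hF, Real.mul_rpow (hh0 s) (Real.rpow_nonneg (hg0 s).le _),
      ← Real.rpow_mul (hg0 s).le, one_div, inv_mul_cancel₀ hkne, Real.rpow_one,
      Real.rpow_natCast]
  have e3 : ∀ s, G s ^ q = g s := by
    intro s
    rw [hG, ← Real.rpow_mul (hg0 s).le, hqval]
    rw [div_mul_div_comm, mul_comm ((k:ℝ) - 1), div_self (ne_of_gt (by nlinarith)), Real.rpow_one]
  rw [integral_congr_ae (ae_of_all _ e1), integral_congr_ae (ae_of_all _ fun s => e2 s),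
    integral_congr_ae (ae_of_all _ e3)] at H
  have hB0 : 0 ≤ ∫ s, h s ^ k * g s ∂μ :=
    integral_nonneg fun s => mul_nonneg (pow_nonneg (hh0 s) k) (hg0 s).le
  have hP0 : 0 ≤ ∫ s, g s ∂μ := integral_nonneg fun s => (hg0 s).le
  have hA0 : 0 ≤ ∫ s, h s * g s ∂μ := integral_nonneg fun s => mul_nonneg (hh0 s) (hg0 s).le
  calc (∫ s, h s * g s ∂μ) ^ k
      ≤ ((∫ s, h s ^ k * g s ∂μ) ^ (1/(k:ℝ)) * (∫ s, g s ∂μ) ^ (1/q)) ^ k :=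
        pow_le_pow_left₀ hA0 H k
    _ = (∫ s, h s ^ k * g s ∂μ) * (∫ s, g s ∂μ) ^ (k - 1) := by
        rw [mul_pow, ← Real.rpow_natCast ((∫ s, h s ^ k * g s ∂μ) ^ (1/(k:ℝ))) k,
          ← Real.rpow_mul hB0, one_div, inv_mul_cancel₀ hkne, Real.rpow_one,
          ← Real.rpow_natCast ((∫ s, g s ∂μ) ^ (1/q)) k, ← Real.rpow_mul hP0]
        congr 1
        have : (1/q) * (k:ℝ) = (k:ℝ) - 1 := by
          rw [hqval]
          field_simp
        rw [this, ← Real.rpow_natCast (∫ s, g s ∂μ) (k-1)]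
        congr 1
        push_cast [Nat.cast_sub hk]
        ring

/-- Pointwise density-score bound for normal perturbations:
`p_X(x) |ρ_X(x)|^k ≤ c_{τ,k} p_U(x)` with `c_{τ,k} = √2 (2k/(τe))^{k/2}`. -/
theorem stmt4 (μ : Measure ℝ) [IsProbabilityMeasure μ] (τ : ℝ) (hτ : 0 < τ)
    (k : ℕ) (hk : 1 ≤ k) (pX p'X pU : ℝ → ℝ)
    (hpX : ∀ x, pX x = ∫ s, gauss τ (x - s) ∂μ)
    (hp'X : ∀ x, p'X x = ∫ s, -((x - s) / τ) * gauss τ (x - s) ∂μ)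
    (hpU : ∀ x, pU x = ∫ s, gauss (2 * τ) (x - s) ∂μ) :
    ∀ x, pX x * |p'X x / pX x| ^ k
      ≤ Real.sqrt 2 * (2 * k / (τ * Real.exp 1)) ^ ((k : ℝ) / 2) * pU x := by
  intro x
  have hg1pos : ∀ s : ℝ, 0 < gauss τ (x - s) := fun s => gauss_pos hτ _
  have hh0 : ∀ s : ℝ, 0 ≤ |x - s| / τ := fun s => by positivity
  have hg1c : Continuous fun s : ℝ => gauss τ (x - s) :=
    (gauss_cont τ).comp (continuous_const.sub continuous_id)
  have hhc : Continuous fun s : ℝ => |x - s| / τ :=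
    ((continuous_const.sub continuous_id).abs).div_const τ
  -- abbreviations
  set c : ℝ := Real.sqrt 2 * (2 * k / (τ * Real.exp 1)) ^ ((k : ℝ) / 2) with hc
  have hc0 : 0 ≤ c := by rw [hc]; positivity
  -- positivity of pX x
  have hP : 0 < pX x := by
    rw [hpX x]
    have hint0 : Integrable (fun s => gauss τ (x - s)) μ :=
      bounded_cont_integrable hg1c ((Real.sqrt (2 * Real.pi * τ))⁻¹) fun s => by
        rw [Real.norm_of_nonneg (hg1pos s).le]; exact gauss_le hτ _
    refine (integral_pos_iff_support_of_nonneg (fun s => (hg1pos s).le) hint0).2 ?_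
    have hsupp : Function.support (fun s : ℝ => gauss τ (x - s)) = Set.univ :=
      Set.eq_univ_of_forall fun s => (hg1pos s).ne'
    rw [hsupp, measure_univ]
    norm_num
  -- |p'X x| ≤ ∫ h * g1
  have hAbs : |p'X x| ≤ ∫ s, (|x - s| / τ) * gauss τ (x - s) ∂μ := by
    rw [hp'X x, ← Real.norm_eq_abs]
    refine (norm_integral_le_integral_norm _).trans_eq ?_
    refine integral_congr_ae (ae_of_all _ fun s => ?_)
    simp only [Real.norm_eq_abs, abs_mul, abs_neg, abs_div, abs_of_pos hτ,
      abs_of_pos (hg1pos s)]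
  -- Hölder step
  have hHolder := abstract_holder (μ := μ) hk hh0 hg1pos hhc hg1c
    ((Real.sqrt (2 * Real.pi * τ))⁻¹ ^ (1/(k:ℝ)) * ((Real.sqrt ((2*τ*(k:ℝ))⁻¹))⁻¹ / τ))
    (fun s => F_bound hτ hk (x - s))
    ((Real.sqrt (2 * Real.pi * τ))⁻¹) (fun s => gauss_le hτ _)
  -- integrability for the B ≤ c * pU step
  have hint_k : Integrable (fun s => (|x - s| / τ) ^ k * gauss τ (x - s)) μ := by
    refine bounded_cont_integrable ((hhc.pow k).mul hg1c)
      (c * (Real.sqrt (2 * Real.pi * (2 * τ)))⁻¹) fun s => ?_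
    rw [Real.norm_of_nonneg (mul_nonneg (pow_nonneg (hh0 s) k) (hg1pos s).le)]
    refine (pointwise_bound hτ hk (x - s)).trans ?_
    rw [← hc]
    exact mul_le_mul_of_nonneg_left (gauss_le (by linarith) _) hc0
  have hint_g2 : Integrable (fun s => c * gauss (2 * τ) (x - s)) μ := by
    refine bounded_cont_integrable
      (continuous_const.mul ((gauss_cont (2*τ)).comp (continuous_const.sub continuous_id)))
      (c * (Real.sqrt (2 * Real.pi * (2 * τ)))⁻¹) fun s => ?_
    rw [Real.norm_of_nonneg (mul_nonneg hc0 (gauss_pos (by linarith) _).le)]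
    exact mul_le_mul_of_nonneg_left (gauss_le (by linarith) _) hc0
  have hB : (∫ s, (|x - s| / τ) ^ k * gauss τ (x - s) ∂μ) ≤ c * pU x := by
    rw [hpU x, ← integral_const_mul]
    exact integral_mono hint_k hint_g2 fun s => by
      simpa [hc] using pointwise_bound hτ hk (x - s)
  -- combine
  have hkey : |p'X x| ^ k
      ≤ (∫ s, (|x - s| / τ) ^ k * gauss τ (x - s) ∂μ) * pX x ^ (k - 1) := by
    calc |p'X x| ^ k ≤ (∫ s, (|x - s| / τ) * gauss τ (x - s) ∂μ) ^ k :=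
          pow_le_pow_left₀ (abs_nonneg _) hAbs k
      _ ≤ (∫ s, (|x - s| / τ) ^ k * gauss τ (x - s) ∂μ) * (∫ s, gauss τ (x - s) ∂μ) ^ (k - 1) :=
          hHolder
      _ = (∫ s, (|x - s| / τ) ^ k * gauss τ (x - s) ∂μ) * pX x ^ (k - 1) := by rw [← hpX x]
  rw [abs_div, abs_of_pos hP, div_pow]
  calc pX x * (|p'X x| ^ k / pX x ^ k)
      ≤ ∫ s, (|x - s| / τ) ^ k * gauss τ (x - s) ∂μ := by
        rw [mul_div_assoc', div_le_iff₀ (pow_pos hP k)]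
        calc pX x * |p'X x| ^ k
            ≤ pX x * ((∫ s, (|x - s| / τ) ^ k * gauss τ (x - s) ∂μ) * pX x ^ (k - 1)) :=
              mul_le_mul_of_nonneg_left hkey hP.le
          _ = (∫ s, (|x - s| / τ) ^ k * gauss τ (x - s) ∂μ) * pX x ^ k := by
              rw [show pX x ^ k = pX x ^ (k - 1) * pX x from by
                rw [← pow_succ, Nat.sub_add_cancel hk]]
              ring
    _ ≤ c * pU x := hB
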